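/- For n ≥ 2 and 1 ≤ p ≤ n−1, at the zero (π/2, 0) of Y(θ,φ) = (−sin 2θ·sin(θ−φ), (n−2p)cos(θ−φ) + n·cos(θ+φ)), the Jacobian matrix of Y has two real eigenvalues of opposite signs, with an eigenvector in the direction (0,1) for the negative eigenvalue and an eigenvector in the direction (p+1, p−n) for the positive eigenvalue. -/

import Mathlib

theorem saddle_at_pi_half_zero (n p : ℕ) (hn : 2 ≤ n) (hp1 : 1 ≤ p) (hp2 : p ≤ n - 1)
    (Y : ℝ × ℝ → ℝ × ℝ)
    (hY : ∀ z : ℝ × ℝ, Y z =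
      (-Real.sin (2 * z.1) * Real.sin (z.1 - z.2),
        ((n : ℝ) - 2 * p) * Real.cos (z.1 - z.2) + (n : ℝ) * Real.cos (z.1 + z.2))) :
    ∃ μplus μminus : ℝ, 0 < μplus ∧ μminus < 0 ∧
      fderiv ℝ Y (Real.pi / 2, 0) (0, 1) = μminus • ((0 : ℝ), (1 : ℝ)) ∧
      fderiv ℝ Y (Real.pi / 2, 0) ((p : ℝ) + 1, (p : ℝ) - n)
        = μplus • ((p : ℝ) + 1, (p : ℝ) - n) := by
  have hYe : Y = fun z : ℝ × ℝ =>
      ((-Real.sin (2 * z.1) * Real.sin (z.1 - z.2),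
        ((n : ℝ) - 2 * p) * Real.cos (z.1 - z.2) + (n : ℝ) * Real.cos (z.1 + z.2)) : ℝ × ℝ) :=
    funext hY
  subst hYe
  have hfst : HasFDerivAt (fun z : ℝ × ℝ => z.1)
      (ContinuousLinearMap.fst ℝ ℝ ℝ) (Real.pi / 2, 0) := hasFDerivAt_fst
  have hsnd : HasFDerivAt (fun z : ℝ × ℝ => z.2)
      (ContinuousLinearMap.snd ℝ ℝ ℝ) (Real.pi / 2, 0) := hasFDerivAt_snd
  have hD := (HasFDerivAt.prodMk ((hfst.const_mul (2 : ℝ)).sin.neg.mul (hfst.sub hsnd).sin)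
    ((((hfst.sub hsnd).cos).const_mul ((n : ℝ) - 2 * p)).add
      (((hfst.add hsnd).cos).const_mul ((n : ℝ)))))
  have hfd : fderiv ℝ (fun z : ℝ × ℝ =>
      ((-Real.sin (2 * z.1) * Real.sin (z.1 - z.2),
        ((n : ℝ) - 2 * p) * Real.cos (z.1 - z.2) + (n : ℝ) * Real.cos (z.1 + z.2)) : ℝ × ℝ))
      (Real.pi / 2, 0) = _ := hD.fderiv
  have e1 : 2 * (Real.pi / 2) = Real.pi := by ring
  have hp0 : (0 : ℝ) < (p : ℝ) := by exact_mod_cast hp1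
  refine ⟨2, -2 * p, by norm_num, by nlinarith, ?_, ?_⟩ <;>
  · rw [hfd]
    simp [ContinuousLinearMap.prod_apply, e1, Real.cos_pi, Real.sin_pi,
      Real.cos_pi_div_two, Real.sin_pi_div_two, Prod.smul_mk, Prod.ext_iff]
    ring
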